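/- Let (W, S) be a Coxeter system. Then the Bruhat order on W is a directed partial order: for every finite subset E of W there exists w in W such that v ≤ w for all v in E. -/

import Mathlib

namespace BruhatDirected

open List CoxeterSystem
open scoped Classical

variable {B W : Type*} [Group W] {M : CoxeterMatrix B} (cs : CoxeterSystem M W)

local prefix:100 "s" => cs.simple
local prefix:100 "π" => cs.wordProd
local prefix:100 "ℓ" => cs.length

theorem ris_cons (i : B) (ω : List B) :
    cs.rightInvSeq (i :: ω) = ((π ω)⁻¹ * s i * π ω) :: cs.rightInvSeq ω := rfl

theorem ris_append (α γ : List B) :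
    cs.rightInvSeq (α ++ γ) =
      (cs.rightInvSeq α).map (fun r => (π γ)⁻¹ * r * π γ) ++ cs.rightInvSeq γ := by
  induction α with
  | nil => simp
  | cons i α ih =>
    rw [cons_append, ris_cons, ris_cons, ih, map_cons, cons_append, cs.wordProd_append]
    congr 1
    rw [mul_inv_rev]
    simp [mul_assoc]

noncomputable def mu (i : B) : W × ℤˣ → W × ℤˣ :=
  fun p => (s i * p.1 * s i, if p.1 = s i then -p.2 else p.2)

theorem mu_fix (i : B) (x : W) : s i * (s i * x * s i) * s i = x := by
  rw [← mul_assoc, ← mul_assoc, cs.simple_mul_simple_self, one_mul, mul_assoc,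
    cs.simple_mul_simple_self, mul_one]

theorem simple_conj_eq_iff (i : B) (x : W) : s i * x * s i = s i ↔ x = s i := by
  constructor
  · intro h
    have := congrArg (fun y => s i * y * s i) h
    rw [mu_fix] at this
    rw [this, cs.simple_mul_simple_self, one_mul]
  · intro h
    rw [h, cs.simple_mul_simple_self, one_mul]

theorem mu_involutive (i : B) : Function.Involutive (mu cs i) := by
  rintro ⟨x, e⟩
  simp only [mu]
  by_cases hx : x = s i
  · simp [hx, cs.simple_mul_simple_self]
  · have h1 : ¬(s i * x * s i = s i) := fun h => hx ((simple_conj_eq_iff cs i x).1 h)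
    simp [hx, h1, mu_fix cs]

noncomputable def sigma (i : B) : Equiv.Perm (W × ℤˣ) := (mu_involutive cs i).toPerm

theorem sigma_apply (i : B) (p : W × ℤˣ) :
    sigma cs i p = (s i * p.1 * s i, if p.1 = s i then -p.2 else p.2) := rfl

noncomputable def Phi (ω : List B) : Equiv.Perm (W × ℤˣ) := (ω.map (sigma cs)).prod

theorem Phi_nil : Phi cs [] = 1 := rfl

theorem Phi_cons (i : B) (ω : List B) : Phi cs (i :: ω) = sigma cs i * Phi cs ω := by
  simp [Phi]

theorem Phi_apply (ω : List B) (t : W) (ε : ℤˣ) :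
    Phi cs ω (t, ε) = (π ω * t * (π ω)⁻¹,
      (-1 : ℤˣ) ^ ((cs.rightInvSeq ω).count t) * ε) := by
  induction ω with
  | nil => simp [Phi_nil]
  | cons i ω ih =>
    rw [Phi_cons, Equiv.Perm.mul_apply, ih, sigma_apply, ris_cons]
    refine Prod.ext ?_ ?_
    · show s i * (π ω * t * (π ω)⁻¹) * s i = π (i :: ω) * t * (π (i :: ω))⁻¹
      rw [cs.wordProd_cons, mul_inv_rev, cs.inv_simple]
      group
    · show (if π ω * t * (π ω)⁻¹ = s i then -((-1 : ℤˣ) ^ ((cs.rightInvSeq ω).count t) * ε)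
          else (-1 : ℤˣ) ^ ((cs.rightInvSeq ω).count t) * ε)
        = (-1 : ℤˣ) ^ ((((π ω)⁻¹ * s i * π ω) :: cs.rightInvSeq ω).count t) * ε
      by_cases hc : t = (π ω)⁻¹ * s i * π ω
      · have hc' : π ω * t * (π ω)⁻¹ = s i := by rw [hc]; group
        have hb : ((π ω)⁻¹ * s i * π ω == t) = true := by simp [hc]
        rw [if_pos hc', List.count_cons, hb]
        simp only [if_pos rfl]
        simp [pow_succ, mul_neg, neg_mul, mul_assoc]
      · have hc' : ¬(π ω * t * (π ω)⁻¹ = s i) := fun h => hc (by rw [← h]; group)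
        have hb : ((π ω)⁻¹ * s i * π ω == t) = false := by
          simp [beq_eq_false_iff_ne]
          exact fun h => hc h.symm
        rw [if_neg hc', List.count_cons, hb]
        simp

theorem conj_pow_aux (x y : W) (h : y * x = x⁻¹ * y) (c : ℕ) : y * x ^ c = (x ^ c)⁻¹ * y := by
  induction c with
  | zero => simp
  | succ c ih =>
    rw [pow_succ', ← mul_assoc, h, mul_assoc, ih, ← mul_assoc, ← mul_inv_rev, ← pow_succ, ← pow_succ']

theorem sj_conj (i j : B) (c : ℕ) :
    s j * (s i * s j) ^ c = ((s i * s j) ^ c)⁻¹ * s j :=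
  conj_pow_aux _ _ (by rw [mul_inv_rev, cs.inv_simple, cs.inv_simple, mul_assoc]) c

theorem si_conj (i j : B) (c : ℕ) :
    s i * (s i * s j) ^ c = ((s i * s j) ^ c)⁻¹ * s i := by
  refine conj_pow_aux _ _ ?_ c
  rw [mul_inv_rev, cs.inv_simple, cs.inv_simple, ← mul_assoc, cs.simple_mul_simple_self, one_mul,
    mul_assoc, cs.simple_mul_simple_self, mul_one]

theorem alt_succ_prod (i j : B) (n : ℕ) :
    π (alternatingWord i j (n+1)) = (if Even n then s j else s i) * π (alternatingWord i j n) := by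
  rw [alternatingWord_succ', cs.wordProd_cons, apply_ite cs.simple]

theorem braid_comm (i j : B) (a : ℕ) :
    (if Even (M i j + a) then s j else s i) * π (alternatingWord i j (M i j)) =
      π (alternatingWord i j (M i j)) * (if Even a then s j else s i) := by
  have hg : (s i * s j) ^ (M i j) = 1 := cs.simple_mul_simple_pow i j
  rw [cs.prod_alternatingWord_eq_mul_pow]
  rcases Nat.even_or_odd (M i j) with hm | hm
  · rw [if_pos hm, one_mul]
    obtain ⟨b, hb⟩ := hm
    have hd : M i j / 2 = b := by omega
    rw [hd]
    have hinv : ((s i * s j) ^ b)⁻¹ = (s i * s j) ^ b := by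
      rw [inv_eq_iff_mul_eq_one, ← pow_add, show b + b = M i j by omega]
      exact hg
    have hme : Even (M i j) := ⟨b, hb⟩
    have hpar : Even (M i j + a) ↔ Even a := by
      simp [Nat.even_add, hme]
    rcases Nat.even_or_odd a with ha | ha
    · rw [if_pos (hpar.2 ha), if_pos ha, sj_conj cs, hinv]
    · rw [if_neg (by rw [hpar]; exact (Nat.not_even_iff_odd).2 ha),
        if_neg ((Nat.not_even_iff_odd).2 ha), si_conj cs, hinv]
  · have hme : ¬ Even (M i j) := (Nat.not_even_iff_odd).2 hm
    rw [if_neg hme]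
    obtain ⟨b, hb⟩ := hm
    have hd : M i j / 2 = b := by omega
    rw [hd]
    have hpar : Even (M i j + a) ↔ ¬ Even a := by
      simp [Nat.even_add, hme]
    rcases Nat.even_or_odd a with ha | ha
    · rw [if_neg (by rw [hpar]; exact not_not.2 ha), if_pos ha]
      -- goal: s i * (s j * g^b) = s j * g^b * s j
      have hr : s j * (s i * s j) ^ b * s j = ((s i * s j) ^ b)⁻¹ := by
        rw [sj_conj cs, mul_assoc, cs.simple_mul_simple_self, mul_one]
      have hl : s i * (s j * (s i * s j) ^ b) = (s i * s j) ^ (b + 1) := by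
        rw [pow_succ', mul_assoc]
      rw [hl, hr, eq_inv_iff_mul_eq_one, ← pow_add, show b + 1 + b = M i j by omega]
      exact hg
    · rw [if_pos (hpar.2 ((Nat.not_even_iff_odd).2 ha)), if_neg ((Nat.not_even_iff_odd).2 ha)]
      -- goal: s j * (s j * g^b) = s j * g^b * s i
      have hl : s j * (s j * (s i * s j) ^ b) = (s i * s j) ^ b := by
        rw [← mul_assoc, cs.simple_mul_simple_self, one_mul]
      have hr : s j * (s i * s j) ^ b * s i = ((s i * s j) ^ (b + 1))⁻¹ := by
        rw [sj_conj cs, mul_assoc, pow_succ', mul_inv_rev, mul_inv_rev, cs.inv_simple,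
          cs.inv_simple]
      rw [hl, hr, eq_inv_iff_mul_eq_one, ← pow_add, show b + (b + 1) = M i j by omega]
      exact hg

theorem P_add (i j : B) (a : ℕ) :
    π (alternatingWord i j (M i j + a)) =
      π (alternatingWord i j (M i j)) * π (alternatingWord i j a) := by
  induction a with
  | zero => simp [alternatingWord]
  | succ a ih =>
    rw [show M i j + (a+1) = (M i j + a) + 1 by omega, alt_succ_prod, ih, ← mul_assoc,
      braid_comm, mul_assoc, ← alt_succ_prod]

theorem ris_getD_eq (ω : List B) (k : ℕ) (h : k < ω.length) :
    (cs.rightInvSeq ω).getD k 1 = (π (ω.drop (k+1)))⁻¹ * π (ω.drop k) := by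
  rw [cs.getD_rightInvSeq]
  have hd : ω.drop k = ω.get ⟨k, h⟩ :: ω.drop (k + 1) := List.drop_eq_getElem_cons h
  rw [hd, cs.wordProd_cons, List.getElem?_eq_getElem h]
  simp [mul_assoc]

theorem drop_alternatingWord (i j : B) (k n : ℕ) :
    (alternatingWord i j n).drop k = alternatingWord i j (n - k) := by
  induction k generalizing n with
  | zero => simp
  | succ k ih =>
    match n with
    | 0 => simp [alternatingWord]
    | n+1 =>
      rw [alternatingWord_succ', List.drop_succ_cons, ih, Nat.succ_sub_succ]

theorem ris_braid_doubling (i j : B) :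
    cs.rightInvSeq (alternatingWord i j (2 * M i j)) =
      (cs.rightInvSeq (alternatingWord i j (2 * M i j))).take (M i j) ++
      (cs.rightInvSeq (alternatingWord i j (2 * M i j))).take (M i j) := by
  set m := M i j with hm
  set ω₀ := alternatingWord i j (2*m) with hω
  have hlen : ω₀.length = 2*m := length_alternatingWord i j (2*m)
  have hrlen : (cs.rightInvSeq ω₀).length = 2*m := by
    rw [cs.length_rightInvSeq, hlen]
  have entry : ∀ k, k < 2*m →
      (cs.rightInvSeq ω₀).getD k 1 =
        (π (alternatingWord i j (2*m - (k+1))))⁻¹ * π (alternatingWord i j (2*m - k)) := by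
    intro k hk
    rw [ris_getD_eq cs ω₀ k (by omega), hω, drop_alternatingWord, drop_alternatingWord]
  have pairing : ∀ n, m ≤ n → n < 2*m →
      (cs.rightInvSeq ω₀).getD n 1 = (cs.rightInvSeq ω₀).getD (n - m) 1 := by
    intro n hmn hn2
    rw [entry n (by omega), entry (n - m) (by omega)]
    rw [show 2*m - (n - m + 1) = M i j + (2*m - (n+1)) by omega,
      show 2*m - (n - m) = M i j + (2*m - n) by omega,
      P_add, P_add, mul_inv_rev, mul_assoc, inv_mul_cancel_left]
  refine List.ext_getElem? (fun n => ?_)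
  have hlt : (List.take m (cs.rightInvSeq ω₀)).length = m := by
    rw [List.length_take, hrlen]; omega
  by_cases h1 : n < m
  · rw [List.getElem?_append_left (by omega : n < (List.take m (cs.rightInvSeq ω₀)).length),
      List.getElem?_take_of_lt h1]
  · by_cases h2 : n < 2*m
    · rw [List.getElem?_append_right (by omega : (List.take m (cs.rightInvSeq ω₀)).length ≤ n),
        hlt, List.getElem?_take_of_lt (by omega : n - m < m)]
      have hp := pairing n (by omega) h2
      rw [List.getElem?_eq_getElem (by omega : n < (cs.rightInvSeq ω₀).length),
        List.getElem?_eq_getElem (by omega : n - m < (cs.rightInvSeq ω₀).length),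
        ← List.getD_eq_getElem _ 1, ← List.getD_eq_getElem _ 1, hp]
    · rw [List.getElem?_eq_none (by omega : (cs.rightInvSeq ω₀).length ≤ n),
        List.getElem?_eq_none (by rw [List.length_append, hlt]; omega)]

theorem pi_alt_two_mul (i j : B) : π (alternatingWord i j (2 * M i j)) = 1 := by
  rw [cs.prod_alternatingWord_eq_mul_pow, if_pos (even_two_mul _), one_mul,
    Nat.mul_div_cancel_left _ (by norm_num)]
  exact cs.simple_mul_simple_pow i j

theorem Phi_alt_pow (i j : B) (m : ℕ) :
    Phi cs (alternatingWord i j (2*m)) = (sigma cs i * sigma cs j)^m := by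
  induction m with
  | zero => simp [Phi, alternatingWord]
  | succ m ih =>
    rw [show 2*(m+1) = (2*m+1)+1 by omega, alternatingWord_succ', alternatingWord_succ',
      if_neg (by simp [Nat.even_add_one]), if_pos (even_two_mul m), Phi_cons, Phi_cons, ih,
      pow_succ', mul_assoc]

theorem sigma_liftable : CoxeterMatrix.IsLiftable M (sigma cs) := by
  intro i j
  rw [← Phi_alt_pow]
  refine Equiv.ext fun p => ?_
  obtain ⟨t, ε⟩ := p
  rw [Phi_apply, pi_alt_two_mul]
  have heven : Even (List.count t (cs.rightInvSeq (alternatingWord i j (2 * M i j)))) := by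
    rw [ris_braid_doubling cs i j, List.count_append]
    exact ⟨_, rfl⟩
  rw [heven.neg_one_pow]
  simp

noncomputable def phi : W →* Equiv.Perm (W × ℤˣ) := cs.lift ⟨sigma cs, sigma_liftable cs⟩

theorem phi_simple (i : B) : phi cs (s i) = sigma cs i := cs.lift_apply_simple _ i

theorem phi_wordProd (ω : List B) : phi cs (π ω) = Phi cs ω := by
  unfold CoxeterSystem.wordProd Phi
  rw [map_list_prod, List.map_map]
  congr 1
  refine List.map_congr_left fun i _ => ?_
  exact phi_simple cs i

noncomputable def eta (w t : W) : ℤˣ := ((phi cs w) (t, 1)).2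

theorem eta_eq (ω : List B) (t : W) :
    eta cs (π ω) t = (-1 : ℤˣ) ^ ((cs.rightInvSeq ω).count t) := by
  unfold eta
  rw [phi_wordProd, Phi_apply, mul_one]

theorem count_aux (j : B) (β' : List B) (t' : W) (hteq : π β' = t') (hinvol : t' * t' = 1)
    (hodd : Odd ((cs.rightInvSeq β').count t')) :
    Odd ((cs.rightInvSeq (j :: (β' ++ [j]))).count (π (j :: (β' ++ [j])))) := by
  rw [ris_cons, ris_append cs, cs.wordProd_cons, cs.wordProd_append, cs.wordProd_singleton,
    CoxeterSystem.rightInvSeq_singleton, cs.inv_simple, hteq]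
  have hinj : Function.Injective (fun r : W => s j * r * s j) := fun a b hab => by
    have := congrArg (fun x => s j * x * s j) hab
    simpa only [mu_fix cs] using this
  have hiff : ((t' * s j)⁻¹ * s j * (t' * s j) = s j * (t' * s j)) ↔ t' = s j := by
    rw [mul_left_inj]
    constructor
    · intro h
      have h2 : (t' * s j)⁻¹ = 1 := mul_right_cancel (b := s j) (by rw [h, one_mul])
      have h3 : t' * s j = 1 := by rw [← inv_inv (t' * s j), h2, inv_one]
      have h4 := congrArg (fun x => x * s j) h3
      simpa [cs.simple_mul_simple_cancel_right] using h4
    · rintro rfl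
      rw [cs.simple_mul_simple_self, inv_one, one_mul]
  have hsing : (s j = s j * (t' * s j)) ↔ t' = s j := by
    constructor
    · intro h
      have h2 : (1 : W) = t' * s j :=
        mul_left_cancel (a := s j) (by rw [mul_one, ← h])
      have h3 := congrArg (fun x => x * s j) h2.symm
      simpa [cs.simple_mul_simple_cancel_right] using h3
    · rintro rfl
      rw [cs.simple_mul_simple_self, mul_one]
  have hmap : (List.map (fun r : W => s j * r * s j) (cs.rightInvSeq β')).count
      (s j * (t' * s j)) = (cs.rightInvSeq β').count t' := by
    have h5 := List.count_map_of_injective (cs.rightInvSeq β')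
      (fun r : W => s j * r * s j) hinj t'
    simpa [mul_assoc] using h5
  rw [List.count_cons, List.count_append, hmap, List.count_singleton']
  by_cases hts : t' = s j
  · rw [if_pos (beq_iff_eq.mpr (hiff.2 hts)), if_pos (hsing.2 hts)]
    obtain ⟨k, hk⟩ := hodd
    exact ⟨k + 1, by omega⟩
  · rw [if_neg (fun h => hts (hiff.1 (beq_iff_eq.mp h))), if_neg (fun h => hts (hsing.1 h))]
    simpa using hodd

theorem count_palindrome_odd (ρ : List B) (i : B) :
    Odd ((cs.rightInvSeq (ρ ++ [i] ++ ρ.reverse)).count (π (ρ ++ [i] ++ ρ.reverse))) := by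
  induction ρ generalizing i with
  | nil => simp
  | cons j ρ ih =>
    have hsplit : (j :: ρ) ++ [i] ++ (j :: ρ).reverse
        = j :: ((ρ ++ [i] ++ ρ.reverse) ++ [j]) := by
      simp
    rw [hsplit]
    have hrefl : cs.IsReflection (π (ρ ++ [i] ++ ρ.reverse)) := by
      refine ⟨π ρ, i, ?_⟩
      rw [cs.wordProd_append, cs.wordProd_append, cs.wordProd_reverse, cs.wordProd_singleton]
    exact count_aux cs j _ _ rfl hrefl.mul_self (ih i)

theorem eta_mul_reflection (w t : W) (ht : cs.IsReflection t) :
    eta cs (w * t) t = - eta cs w t := by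
  obtain ⟨v, i, htv⟩ := id ht
  obtain ⟨ρ, hρ⟩ := cs.wordProd_surjective v
  obtain ⟨σ, hσ⟩ := cs.wordProd_surjective w
  have hβ : π (ρ ++ [i] ++ ρ.reverse) = t := by
    rw [cs.wordProd_append, cs.wordProd_append, cs.wordProd_reverse, cs.wordProd_singleton, hρ,
      ← htv]
  have hprod : w * t = π (σ ++ (ρ ++ [i] ++ ρ.reverse)) := by
    rw [cs.wordProd_append, hσ, hβ]
  rw [hprod, ← hσ, eta_eq, eta_eq, ris_append cs, hβ, List.count_append]
  have hinj : Function.Injective (fun r : W => t⁻¹ * r * t) := fun a b hab => by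
    have := congrArg (fun x : W => t * x * t⁻¹) hab
    simpa [mul_assoc] using this
  have hmapcount : (List.map (fun r : W => t⁻¹ * r * t) (cs.rightInvSeq σ)).count t
      = (cs.rightInvSeq σ).count t := by
    have h5 := List.count_map_of_injective (cs.rightInvSeq σ) (fun r : W => t⁻¹ * r * t) hinj t
    simpa using h5
  rw [hmapcount]
  have hodd := count_palindrome_odd cs ρ i
  rw [hβ] at hodd
  rw [pow_add, hodd.neg_one_pow, mul_neg_one]

theorem eta_eq_one_of_gt (w t : W) (hlen : ℓ w < ℓ (w * t)) : eta cs w t = 1 := by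
  obtain ⟨σ, hred, hσ⟩ := cs.exists_reduced_word' w
  rw [hσ, eta_eq]
  have hnot : t ∉ cs.rightInvSeq σ := by
    intro hmem
    have h2 := cs.isRightInversion_of_mem_rightInvSeq hred hmem
    rw [← hσ] at h2
    obtain ⟨-, h3⟩ := h2
    omega
  rw [List.count_eq_zero_of_not_mem hnot, pow_zero]

theorem eta_eq_neg_one_of_lt (w t : W) (ht : cs.IsReflection t) (hlen : ℓ (w * t) < ℓ w) :
    eta cs w t = -1 := by
  have h1 : eta cs ((w * t) * t) t = - eta cs (w * t) t := eta_mul_reflection cs (w * t) t ht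
  rw [mul_assoc, ht.mul_self, mul_one] at h1
  rw [h1, eta_eq_one_of_gt cs (w * t) t (by rw [mul_assoc, ht.mul_self, mul_one]; exact hlen)]

theorem strong_exchange (ω : List B) (t : W) (ht : cs.IsReflection t)
    (hlen : ℓ (π ω * t) < ℓ (π ω)) :
    ∃ j, j < ω.length ∧ π ω * t = π (ω.eraseIdx j) := by
  have heta : eta cs (π ω) t = -1 := eta_eq_neg_one_of_lt cs (π ω) t ht hlen
  rw [eta_eq] at heta
  have hodd : Odd ((cs.rightInvSeq ω).count t) := by
    rcases Nat.even_or_odd ((cs.rightInvSeq ω).count t) with he | ho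
    · rw [he.neg_one_pow] at heta
      exact absurd heta (by decide)
    · exact ho
  have hmem : t ∈ cs.rightInvSeq ω := by
    by_contra h
    rw [List.count_eq_zero_of_not_mem h] at hodd
    simp [Nat.odd_iff] at hodd
  obtain ⟨j, hj, hjt⟩ := List.getElem_of_mem hmem
  refine ⟨j, by rw [← cs.length_rightInvSeq ω]; exact hj, ?_⟩
  rw [← cs.wordProd_mul_getD_rightInvSeq ω j]
  congr 1
  rw [List.getD_eq_getElem _ 1 hj, hjt]

theorem deletion (ω : List B) :
    ∃ τ : List B, τ.Sublist ω ∧ cs.IsReduced τ ∧ π τ = π ω := by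
  generalize hn : ω.length = n
  induction n using Nat.strong_induction_on generalizing ω with
  | _ n ih =>
  subst hn
  by_cases hred : cs.IsReduced ω
  · exact ⟨ω, List.Sublist.refl ω, hred, rfl⟩
  · have hex : ∃ k, ¬ cs.IsReduced (ω.take (k+1)) :=
      ⟨ω.length, by rw [List.take_of_length_le (by omega)]; exact hred⟩
    set k := Nat.find hex with hkdef
    have hk : ¬ cs.IsReduced (ω.take (k+1)) := Nat.find_spec hex
    have hkred : cs.IsReduced (ω.take k) := by
      rcases Nat.eq_zero_or_pos k with h0 | hpos
      · rw [h0]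
        simp [CoxeterSystem.IsReduced]
      · have h2 := Nat.find_min hex (m := k - 1) (by omega)
        rw [not_not, show k - 1 + 1 = k by omega] at h2
        exact h2
    have hklen : k < ω.length := by
      by_contra hcon
      push_neg at hcon
      rw [List.take_of_length_le hcon] at hkred
      exact hred hkred
    have htk : ω.take (k+1) = ω.take k ++ [ω[k]'hklen] := by
      rw [List.take_succ, List.getElem?_eq_getElem hklen]
      rfl
    have hπk1 : π (ω.take (k+1)) = π (ω.take k) * s (ω[k]'hklen) := by
      rw [htk, cs.wordProd_append, cs.wordProd_singleton]
    have hlenk : ℓ (π (ω.take k)) = k := by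
      have h3 : ℓ (π (ω.take k)) = (ω.take k).length := hkred
      rwa [List.length_take, min_eq_left (by omega)] at h3
    have hlt : ℓ (π (ω.take k) * s (ω[k]'hklen)) < ℓ (π (ω.take k)) := by
      rcases cs.length_mul_simple (π (ω.take k)) (ω[k]'hklen) with h5 | h5
      · exfalso
        apply hk
        show ℓ (π (ω.take (k+1))) = (ω.take (k+1)).length
        rw [hπk1, h5, hlenk, List.length_take, min_eq_left (by omega)]
      · omega
    obtain ⟨j, hj, hje⟩ := strong_exchange cs (ω.take k) (s (ω[k]'hklen))
      (cs.isReflection_simple _) hlt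
    have hjk : j < k := by rwa [List.length_take, min_eq_left (by omega)] at hj
    have hsplit : π ω = π (ω.take k) * s (ω[k]'hklen) * π (ω.drop (k+1)) := by
      conv_lhs => rw [← List.take_append_drop (k+1) ω]
      rw [cs.wordProd_append, hπk1]
    have hω'sub : ((ω.take k).eraseIdx j ++ ω.drop (k+1)).Sublist ω := by
      have s1 : ((ω.take k).eraseIdx j).Sublist (ω.take k) := List.eraseIdx_sublist _ j
      have s2 : (ω.drop (k+1)).Sublist (ω.drop k) := by
        rw [List.drop_eq_getElem_cons hklen]
        exact List.sublist_cons_self _ _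
      have s3 := List.Sublist.append s1 s2
      rwa [List.take_append_drop] at s3
    have hω'prod : π ((ω.take k).eraseIdx j ++ ω.drop (k+1)) = π ω := by
      rw [cs.wordProd_append, ← hje, hsplit]
    have hω'len : ((ω.take k).eraseIdx j ++ ω.drop (k+1)).length < ω.length := by
      rw [List.length_append]
      have h6 := List.length_eraseIdx_add_one (l := ω.take k) (i := j)
        (by rwa [List.length_take, min_eq_left (by omega)])
      rw [List.length_take, min_eq_left (by omega)] at h6
      rw [List.length_drop]
      omega
    obtain ⟨τ, ht1, ht2, ht3⟩ := ih _ hω'len _ rfl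
    exact ⟨τ, ht1.trans hω'sub, ht2, by rw [ht3, hω'prod]⟩

/-- One step in the Bruhat order. -/
def BStep (u w : W) : Prop := ∃ t, cs.IsReflection t ∧ w = u * t ∧ ℓ u < ℓ w

/-- The Bruhat order. -/
def BLe : W → W → Prop := Relation.ReflTransGen (BStep cs)

theorem one_ble (w : W) : BLe cs 1 w := by
  generalize hn : ℓ w = n
  induction n using Nat.strong_induction_on generalizing w with
  | _ n ih =>
  subst hn
  by_cases hw : w = 1
  · rw [hw]
    exact Relation.ReflTransGen.refl
  · obtain ⟨i, hi⟩ := cs.exists_rightDescent_of_ne_one hw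
    have hi' : ℓ (w * s i) < ℓ w := hi
    have h1 : BLe cs 1 (w * s i) := ih (ℓ (w * s i)) hi' _ rfl
    refine Relation.ReflTransGen.tail h1 ?_
    exact ⟨s i, cs.isReflection_simple i,
      by rw [mul_assoc, cs.simple_mul_simple_self, mul_one], hi'⟩

theorem ble_subword {u w : W} (h : BLe cs u w) :
    ∀ ω : List B, cs.IsReduced ω → π ω = w →
      ∃ τ : List B, τ.Sublist ω ∧ cs.IsReduced τ ∧ π τ = u := by
  induction h with
  | refl => exact fun ω hred hπ => ⟨ω, List.Sublist.refl ω, hred, hπ⟩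
  | @tail b c hab hbc ihab =>
    intro ω hred hπ
    obtain ⟨t, ht, hc, hlen⟩ := hbc
    have hbt : π ω * t = b := by rw [hπ, hc, mul_assoc, ht.mul_self, mul_one]
    have hlt : ℓ (π ω * t) < ℓ (π ω) := by rw [hbt, hπ, hc]; rw [hc] at hlen; exact hlen
    obtain ⟨j, hj, hje⟩ := strong_exchange cs ω t ht hlt
    obtain ⟨τ₁, hs1, hr1, hp1⟩ := deletion cs (ω.eraseIdx j)
    obtain ⟨τ, hs, hr, hp⟩ := ihab τ₁ hr1 (by rw [hp1, ← hje, hbt])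
    exact ⟨τ, hs.trans (hs1.trans (List.eraseIdx_sublist ω j)), hr, hp⟩

theorem lift_g (i : B) {w : W} (hw : ℓ (s i * w) < ℓ w) :
    ∀ {u : W}, BLe cs u w → ℓ u < ℓ (s i * u) → BLe cs (s i * u) w := by
  intro u hle
  induction hle using Relation.ReflTransGen.head_induction_on with
  | refl => intro hu; omega
  | @head u' z hstep hrest ih =>
    intro hu
    obtain ⟨t, ht, hz, hlt⟩ := hstep
    by_cases hz2 : ℓ z < ℓ (s i * z)
    · have h1 : BLe cs (s i * z) w := ih hz2
      refine Relation.ReflTransGen.head ?_ h1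
      refine ⟨t, ht, by rw [hz, mul_assoc], ?_⟩
      have h2 : ℓ (s i * u') = ℓ u' + 1 := by
        rcases cs.length_simple_mul u' i with h | h <;> omega
      omega
    · push_neg at hz2
      have hz3 : ℓ (s i * z) < ℓ z := by
        rcases cs.length_simple_mul z i with h | h <;> omega
      rcases lt_trichotomy (ℓ (s i * u')) (ℓ (s i * z)) with hcmp | hcmp | hcmp
      · have hstep1 : BStep cs (s i * u') (s i * z) := ⟨t, ht, by rw [hz, mul_assoc], hcmp⟩
        have hstep2 : BStep cs (s i * z) z :=
          ⟨(s i * z)⁻¹ * s i * (s i * z), ⟨(s i * z)⁻¹, i, by rw [inv_inv]⟩,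
            by rw [mul_assoc ((s i * z)⁻¹), mul_inv_cancel_left,
              cs.simple_mul_simple_cancel_left], hz3⟩
        exact Relation.ReflTransGen.head hstep1 (Relation.ReflTransGen.head hstep2 hrest)
      · exfalso
        have h3 := ht.length_mul_left_ne (s i * u')
        rw [mul_assoc, ← hz] at h3
        exact h3 hcmp.symm
      · obtain ⟨σ, hredσ, hσ⟩ := cs.exists_reduced_word' (s i * z)
        have e1 : ℓ (π σ) = σ.length := hredσ
        rw [← hσ] at e1
        have hπω : π (i :: σ) = z := by
          rw [cs.wordProd_cons, ← hσ, cs.simple_mul_simple_cancel_left]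
        have hlt2 : ℓ (π (i :: σ) * t) < ℓ (π (i :: σ)) := by
          rw [hπω, hz, mul_assoc, ht.mul_self, mul_one]
          rw [hz] at hlt
          exact hlt
        obtain ⟨j, hj, hje⟩ := strong_exchange cs (i :: σ) t ht hlt2
        have hu' : u' = π ((i :: σ).eraseIdx j) := by
          rw [← hje, hπω, hz, mul_assoc, ht.mul_self, mul_one]
        cases j with
        | zero =>
          have h4 : u' = s i * z := by
            rw [hu', List.eraseIdx_cons_zero, ← hσ]
          have h5 : s i * u' = z := by rw [h4, cs.simple_mul_simple_cancel_left]
          rw [h5]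
          exact hrest
        | succ j' =>
          exfalso
          have he : (i :: σ).eraseIdx (j' + 1) = i :: σ.eraseIdx j' := rfl
          rw [he, cs.wordProd_cons] at hu'
          have h6 : s i * u' = π (σ.eraseIdx j') := by
            rw [hu', cs.simple_mul_simple_cancel_left]
          have h7 : ℓ (s i * u') ≤ (σ.eraseIdx j').length := by
            rw [h6]; exact cs.length_wordProd_le _
          have h8 : (σ.eraseIdx j').length ≤ σ.length := (List.eraseIdx_sublist σ j').length_le
          omega

theorem directed_pair (u v : W) : ∃ z, BLe cs u z ∧ BLe cs v z := by
  generalize hn : ℓ v = n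
  induction n using Nat.strong_induction_on generalizing u v with
  | _ n ih =>
  subst hn
  by_cases hv : v = 1
  · exact ⟨u, Relation.ReflTransGen.refl, by rw [hv]; exact one_ble cs u⟩
  · obtain ⟨i, hi⟩ := cs.exists_leftDescent_of_ne_one hv
    have hi' : ℓ (s i * v) < ℓ v := hi
    obtain ⟨z, hz1, hz2⟩ := ih (ℓ (s i * v)) hi' u (s i * v) rfl
    have hvv : s i * (s i * v) = v := by rw [cs.simple_mul_simple_cancel_left]
    have hasc : ℓ (s i * v) < ℓ (s i * (s i * v)) := by rw [hvv]; exact hi'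
    by_cases hzz : ℓ (s i * z) < ℓ z
    · refine ⟨z, hz1, ?_⟩
      have h2 := lift_g cs i hzz hz2 hasc
      rwa [hvv] at h2
    · have hzz2 : ℓ z < ℓ (s i * z) := by
        rcases cs.length_simple_mul z i with h | h <;> omega
      have hzstep : BStep cs z (s i * z) :=
        ⟨z⁻¹ * s i * z, ⟨z⁻¹, i, by rw [inv_inv]⟩,
          by rw [mul_assoc z⁻¹, mul_inv_cancel_left], hzz2⟩
      have hsiz : ℓ (s i * (s i * z)) < ℓ (s i * z) := by
        rw [cs.simple_mul_simple_cancel_left]; exact hzz2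
      refine ⟨s i * z, hz1.tail hzstep, ?_⟩
      have hle2 : BLe cs (s i * v) (s i * z) := hz2.tail hzstep
      have h2 := lift_g cs i hsiz hle2 hasc
      rwa [hvv] at h2

theorem directed_finset (E : Finset W) : ∃ z, ∀ v ∈ E, BLe cs v z := by
  classical
  induction E using Finset.induction_on with
  | empty => exact ⟨1, by simp⟩
  | @insert a E ha ihE =>
    obtain ⟨z, hz⟩ := ihE
    obtain ⟨z', ha', hzz'⟩ := directed_pair cs a z
    refine ⟨z', fun v hv => ?_⟩
    rcases Finset.mem_insert.1 hv with rfl | hv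
    · exact ha'
    · exact (hz v hv).trans hzz'

end BruhatDirected

/-- The Bruhat order on a Coxeter group (characterized by the subword property:
`u ≤ w` iff every reduced word for `w` has a sublist that is a reduced word for `u`)
is directed: every finite subset of `W` has an upper bound. -/
theorem stmt1 {B W : Type*} [Group W] {M : CoxeterMatrix B} (cs : CoxeterSystem M W)
    (bruhatLE : W → W → Prop)
    (hle : ∀ u w : W, bruhatLE u w ↔
      ∀ ω : List B, cs.IsReduced ω → cs.wordProd ω = w →
        ∃ ω' : List B, ω'.Sublist ω ∧ cs.IsReduced ω' ∧ cs.wordProd ω' = u)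
    (E : Finset W) :
    ∃ w : W, ∀ v ∈ E, bruhatLE v w := by
  obtain ⟨z, hz⟩ := BruhatDirected.directed_finset cs E
  exact ⟨z, fun v hv => (hle v z).mpr (BruhatDirected.ble_subword cs (hz v hv))⟩
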